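/- (Uniform convergence of best L²(μ)-approximants) Let K ⊂ ℂ^N be a compact, polynomially convex, L-regular set and let μ be a finite positive Borel measure supported on K such that (K,μ) has the Bernstein–Markov property. Suppose f ∈ C(K) satisfies limsup_{n→∞} d_n(f,K)^{1/n} = ρ < 1, and for each n let p_n be a holomorphic polynomial of degree at most n minimizing ‖f − p‖_{L²(μ)} over all holomorphic polynomials p of degree at most n. Then limsup_{n→∞} ‖f − p_n‖_K^{1/n} = ρ. -/

import Mathlib

open Filter MeasureTheory

/-- Evaluation of a holomorphic polynomial in `N` complex variables at a point of `ℂ^N`. -/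
noncomputable def evalP {N : ℕ} (p : MvPolynomial (Fin N) ℂ)
    (z : EuclideanSpace ℂ (Fin N)) : ℂ :=
  MvPolynomial.eval (fun j => z j) p

/-- The supremum norm `‖g‖_K = sup_{z ∈ K} |g z|`. -/
noncomputable def supK {N : ℕ} (K : Set (EuclideanSpace ℂ (Fin N)))
    (g : EuclideanSpace ℂ (Fin N) → ℂ) : ℝ :=
  ⨆ z : K, ‖g z‖

/-- `d_n(f,K)`: distance from `f` to the holomorphic polynomials of degree at most `n`
in the supremum norm on `K`. -/
noncomputable def dnApprox {N : ℕ} (K : Set (EuclideanSpace ℂ (Fin N)))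
    (f : EuclideanSpace ℂ (Fin N) → ℂ) (n : ℕ) : ℝ :=
  ⨅ p : {p : MvPolynomial (Fin N) ℂ // p.totalDegree ≤ n},
    supK K (fun z => f z - evalP p.1 z)

/-- The (Siciak) extremal function
`V_K(z) = max(0, sup {(1/deg p) log |p(z)| : p nonconstant, ‖p‖_K ≤ 1})`. -/
noncomputable def VK {N : ℕ} (K : Set (EuclideanSpace ℂ (Fin N)))
    (z : EuclideanSpace ℂ (Fin N)) : ℝ :=
  max 0 (⨆ p : {p : MvPolynomial (Fin N) ℂ // 0 < p.totalDegree ∧ supK K (evalP p) ≤ 1},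
    ((p.1.totalDegree : ℝ))⁻¹ * Real.log (‖evalP p.1 z‖))

/-- The polynomial hull `K̂ = {z : |p(z)| ≤ ‖p‖_K for all holomorphic polynomials p}`. -/
noncomputable def polyHull {N : ℕ} (K : Set (EuclideanSpace ℂ (Fin N))) :
    Set (EuclideanSpace ℂ (Fin N)) :=
  {z | ∀ p : MvPolynomial (Fin N) ℂ, ‖evalP p z‖ ≤ supK K (evalP p)}

/-- The `L²(μ)` norm `(∫ |g|² dμ)^{1/2}`. -/
noncomputable def L2norm {N : ℕ} [MeasurableSpace (EuclideanSpace ℂ (Fin N))]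
    (μ : Measure (EuclideanSpace ℂ (Fin N))) (g : EuclideanSpace ℂ (Fin N) → ℂ) : ℝ :=
  Real.sqrt (∫ z, ‖g z‖ ^ 2 ∂μ)

/- Auxiliary lemmas -/

lemma evalP_continuous {N : ℕ} (p : MvPolynomial (Fin N) ℂ) : Continuous (evalP p) := by
  have h1 : Continuous fun z : EuclideanSpace ℂ (Fin N) => (fun j => z j : Fin N → ℂ) :=
    continuous_pi fun j => (EuclideanSpace.proj j : EuclideanSpace ℂ (Fin N) →L[ℂ] ℂ).continuous
  show Continuous ((fun x : Fin N → ℂ => MvPolynomial.eval x p) ∘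
    (fun z : EuclideanSpace ℂ (Fin N) => (fun j => z j : Fin N → ℂ)))
  exact Continuous.comp (MvPolynomial.continuous_eval p) h1

lemma evalP_sub {N : ℕ} (q r : MvPolynomial (Fin N) ℂ) (z : EuclideanSpace ℂ (Fin N)) :
    evalP (q - r) z = evalP q z - evalP r z := by
  simp [evalP]

lemma supK_nonneg {N : ℕ} (K : Set (EuclideanSpace ℂ (Fin N))) (g) : 0 ≤ supK K g :=
  Real.iSup_nonneg fun _ => norm_nonneg _

lemma bddAbove_absK {N : ℕ} {K : Set (EuclideanSpace ℂ (Fin N))} (hK : IsCompact K)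
    {g : EuclideanSpace ℂ (Fin N) → ℂ} (hg : ContinuousOn g K) :
    BddAbove (Set.range fun z : K => ‖g z‖) := by
  rw [← Set.image_eq_range (fun z => ‖g z‖) K]
  exact (hK.image_of_continuousOn (continuous_norm.comp_continuousOn hg)).bddAbove

lemma le_supK {N : ℕ} {K : Set (EuclideanSpace ℂ (Fin N))} (hK : IsCompact K)
    {g} (hg : ContinuousOn g K) {z} (hz : z ∈ K) :
    ‖g z‖ ≤ supK K g :=
  le_ciSup (bddAbove_absK hK hg) (⟨z, hz⟩ : K)

lemma supK_le {N : ℕ} {K : Set (EuclideanSpace ℂ (Fin N))} (hne : K.Nonempty)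
    {g} {a : ℝ} (h : ∀ z ∈ K, ‖g z‖ ≤ a) : supK K g ≤ a := by
  haveI := hne.to_subtype
  exact ciSup_le fun z => h z z.2

set_option maxHeartbeats 1000000 in
/-- **Uniform convergence of best `L²(μ)`-approximants.** Let `K ⊂ ℂ^N` be compact,
polynomially convex and `L`-regular, and let `μ` be a finite measure supported on `K`
with the Bernstein–Markov property. If `f ∈ C(K)` has `limsup d_n(f,K)^{1/n} = ρ < 1`
and `p_n` are best `L²(μ)` polynomial approximants of degree at most `n`, then
`limsup ‖f - p_n‖_K^{1/n} = ρ`. -/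
theorem best_L2_approximants (N : ℕ)
    [MeasurableSpace (EuclideanSpace ℂ (Fin N))]
    [BorelSpace (EuclideanSpace ℂ (Fin N))]
    (K : Set (EuclideanSpace ℂ (Fin N))) (hK : IsCompact K)
    (hpc : polyHull K = K) (hreg : Continuous (VK K))
    (μ : Measure (EuclideanSpace ℂ (Fin N))) [IsFiniteMeasure μ]
    (hsupp : μ Kᶜ = 0)
    (hBM : ∀ ε : ℝ, 0 < ε → ∃ M : ℝ, 0 < M ∧
      ∀ p : MvPolynomial (Fin N) ℂ,
        supK K (evalP p) ≤ M * (1 + ε) ^ p.totalDegree * L2norm μ (evalP p))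
    (f : EuclideanSpace ℂ (Fin N) → ℂ) (hf : ContinuousOn f K)
    (ρ : ℝ) (hρ : ρ < 1)
    (hd : limsup (fun n : ℕ => dnApprox K f n ^ ((n : ℝ)⁻¹)) atTop = ρ)
    (p : ℕ → MvPolynomial (Fin N) ℂ)
    (hpdeg : ∀ n, (p n).totalDegree ≤ n)
    (hpbest : ∀ (n : ℕ) (q : MvPolynomial (Fin N) ℂ), q.totalDegree ≤ n →
      L2norm μ (fun z => f z - evalP (p n) z) ≤ L2norm μ (fun z => f z - evalP q z)) :
    limsup (fun n : ℕ =>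
      supK K (fun z => f z - evalP (p n) z) ^ ((n : ℝ)⁻¹)) atTop = ρ := by
  classical
  -- trivial case: K empty
  rcases K.eq_empty_or_nonempty with hKe | hne
  · haveI : IsEmpty K := Set.isEmpty_coe_sort.mpr hKe
    have hs : ∀ g : EuclideanSpace ℂ (Fin N) → ℂ, supK K g = 0 := by
      intro g
      unfold supK
      exact Real.iSup_of_isEmpty _
    have hdn : ∀ n, dnApprox K f n = 0 := by
      intro n
      haveI : Nonempty {p : MvPolynomial (Fin N) ℂ // p.totalDegree ≤ n} :=
        ⟨⟨0, by simp⟩⟩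
      unfold dnApprox
      simp only [hs]
      exact ciInf_const
    simp only [hs]
    rw [← hd]
    congr 1
    funext n
    rw [hdn n]
  haveI := hne.to_subtype
  -- basic facts
  have hcont : ∀ r : MvPolynomial (Fin N) ℂ, ContinuousOn (fun z => f z - evalP r z) K :=
    fun r => hf.sub (evalP_continuous r).continuousOn
  have hμK : ∀ᵐ z ∂μ, z ∈ K := by
    rw [ae_iff]
    exact hsupp
  have hfaesm : AEStronglyMeasurable f μ := by
    have h1 : AEStronglyMeasurable f (μ.restrict K) :=
      hf.aestronglyMeasurable hK.measurableSet
    rwa [Measure.restrict_eq_self_of_ae_mem hμK] at h1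
  set C : ℝ := Real.sqrt (μ Set.univ).toReal with hCdef
  have hC0 : 0 ≤ C := Real.sqrt_nonneg _
  -- integral bounds
  have hint_le : ∀ g : EuclideanSpace ℂ (Fin N) → ℂ, ContinuousOn g K →
      (∫ z, ‖g z‖ ^ 2 ∂μ) ≤ (μ Set.univ).toReal * supK K g ^ 2 := by
    intro g hg
    have hb : ∀ᵐ z ∂μ, ‖g z‖ ^ 2 ≤ supK K g ^ 2 := by
      filter_upwards [hμK] with z hz
      have h1 := le_supK hK hg hz
      nlinarith [norm_nonneg (g z)]
    calc (∫ z, ‖g z‖ ^ 2 ∂μ)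
        ≤ ∫ _z, supK K g ^ 2 ∂μ :=
          integral_mono_of_nonneg (Eventually.of_forall fun z => by positivity)
            (integrable_const _) hb
      _ = (μ Set.univ).toReal * supK K g ^ 2 := by
          simp [integral_const, smul_eq_mul, Measure.real]
  have hL2_le : ∀ g : EuclideanSpace ℂ (Fin N) → ℂ, ContinuousOn g K →
      L2norm μ g ≤ C * supK K g := by
    intro g hg
    unfold L2norm
    refine le_trans (Real.sqrt_le_sqrt (hint_le g hg)) ?_
    rw [Real.sqrt_mul ENNReal.toReal_nonneg, Real.sqrt_sq (supK_nonneg K g)]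
  -- integrability of squares
  have hint : ∀ r : MvPolynomial (Fin N) ℂ,
      Integrable (fun z => ‖f z - evalP r z‖ ^ 2) μ := by
    intro r
    have haesm : AEStronglyMeasurable (fun z => f z - evalP r z) μ :=
      hfaesm.sub (evalP_continuous r).aestronglyMeasurable
    refine Integrable.mono'
      (integrable_const (supK K (fun z => f z - evalP r z) ^ 2)) ?_ ?_
    · have h2 : (fun z => ‖f z - evalP r z‖ ^ 2)
          = fun z => ‖f z - evalP r z‖ ^ 2 := by
        funext z; rfl
      rw [h2]
      exact haesm.norm.pow 2
    · filter_upwards [hμK] with z hz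
      have h1 := le_supK hK (hcont r) hz
      have h0 := norm_nonneg (f z - evalP r z)
      rw [Real.norm_eq_abs, abs_of_nonneg (by positivity)]
      nlinarith
  -- L² comparison for the difference polynomial
  have hL2sub : ∀ (n : ℕ) (q : MvPolynomial (Fin N) ℂ), q.totalDegree ≤ n →
      L2norm μ (evalP (q - p n)) ≤ 2 * L2norm μ (fun z => f z - evalP q z) := by
    intro n q hq
    set A := ∫ z, ‖f z - evalP (p n) z‖ ^ 2 ∂μ with hA
    set B := ∫ z, ‖f z - evalP q z‖ ^ 2 ∂μ with hB
    have hA0 : 0 ≤ A := integral_nonneg fun z => by positivity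
    have hB0 : 0 ≤ B := integral_nonneg fun z => by positivity
    have hAB : A ≤ B := by
      have h := hpbest n q hq
      unfold L2norm at h
      nlinarith [Real.sq_sqrt hA0, Real.sq_sqrt hB0, Real.sqrt_nonneg A, Real.sqrt_nonneg B]
    have hptw : ∀ z, ‖evalP (q - p n) z‖ ^ 2 ≤
        2 * ‖f z - evalP (p n) z‖ ^ 2 +
        2 * ‖f z - evalP q z‖ ^ 2 := by
      intro z
      have h1 : ‖evalP (q - p n) z‖ ≤
          ‖f z - evalP (p n) z‖ + ‖f z - evalP q z‖ := by
        rw [evalP_sub]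
        have he : evalP q z - evalP (p n) z
            = (f z - evalP (p n) z) - (f z - evalP q z) := by ring
        rw [he]
        simpa using
          norm_sub_le (f z - evalP (p n) z) (f z - evalP q z)
      have hu0 := norm_nonneg (evalP (q - p n) z)
      have h2 := pow_le_pow_left₀ hu0 h1 2
      nlinarith [h2, sq_nonneg (‖f z - evalP (p n) z‖ -
        ‖f z - evalP q z‖)]
    have hU : (∫ z, ‖evalP (q - p n) z‖ ^ 2 ∂μ) ≤ 2 * A + 2 * B := by
      have h2 : (∫ z, (2 * ‖f z - evalP (p n) z‖ ^ 2 +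
          2 * ‖f z - evalP q z‖ ^ 2) ∂μ) = 2 * A + 2 * B := by
        rw [integral_add ((hint (p n)).const_mul 2) ((hint q).const_mul 2),
          integral_const_mul, integral_const_mul]
      calc (∫ z, ‖evalP (q - p n) z‖ ^ 2 ∂μ)
          ≤ ∫ z, (2 * ‖f z - evalP (p n) z‖ ^ 2 +
              2 * ‖f z - evalP q z‖ ^ 2) ∂μ :=
            integral_mono_of_nonneg (Eventually.of_forall fun z => by positivity)
              (((hint (p n)).const_mul 2).add ((hint q).const_mul 2))
              (Eventually.of_forall hptw)
        _ = 2 * A + 2 * B := h2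
    unfold L2norm
    have h3 : (∫ z, ‖evalP (q - p n) z‖ ^ 2 ∂μ) ≤ 4 * B := by linarith
    refine le_trans (Real.sqrt_le_sqrt h3) ?_
    rw [show (4:ℝ) * B = (2 * Real.sqrt B) ^ 2 by
      rw [mul_pow, Real.sq_sqrt hB0]; norm_num]
    rw [Real.sqrt_sq (by positivity)]
  -- nonnegativity and elementary bounds for dnApprox
  have hd0 : ∀ n, 0 ≤ dnApprox K f n := by
    intro n
    haveI : Nonempty {p : MvPolynomial (Fin N) ℂ // p.totalDegree ≤ n} := ⟨⟨0, by simp⟩⟩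
    exact le_ciInf fun q => supK_nonneg K _
  have hbddBelow : ∀ n, BddBelow (Set.range fun q : {p : MvPolynomial (Fin N) ℂ //
      p.totalDegree ≤ n} => supK K (fun z => f z - evalP q.1 z)) := by
    intro n
    refine ⟨0, ?_⟩
    rintro x ⟨q, rfl⟩
    exact supK_nonneg K _
  have hdle : ∀ n, dnApprox K f n ≤ supK K (fun z => f z - evalP (p n) z) := by
    intro n
    exact ciInf_le (hbddBelow n) ⟨p n, hpdeg n⟩
  have hDbound : ∀ n, dnApprox K f n ≤ supK K f := by
    intro n
    have h1 : dnApprox K f n ≤ supK K (fun z => f z - evalP 0 z) :=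
      ciInf_le (hbddBelow n) ⟨0, by simp⟩
    have h2 : (fun z : EuclideanSpace ℂ (Fin N) => f z - evalP 0 z) = f := by
      funext z; simp [evalP]
    rwa [h2] at h1
  -- exponent facts
  have hexp_nn : ∀ n : ℕ, (0:ℝ) ≤ ((n:ℝ))⁻¹ := fun n => by positivity
  have hexp_le_one : ∀ n : ℕ, ((n:ℝ))⁻¹ ≤ 1 := by
    intro n
    rcases Nat.eq_zero_or_pos n with h | h
    · simp [h]
    · have : (1:ℝ) ≤ n := by exact_mod_cast h
      exact inv_le_one_of_one_le₀ this
  -- boundedness of the d-sequence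
  have hdseq_le : ∀ n, dnApprox K f n ^ ((n:ℝ)⁻¹) ≤ max 1 (supK K f) := by
    intro n
    have h1 : dnApprox K f n ≤ max 1 (supK K f) := (hDbound n).trans (le_max_right _ _)
    calc dnApprox K f n ^ ((n:ℝ)⁻¹) ≤ (max 1 (supK K f)) ^ ((n:ℝ)⁻¹) :=
          Real.rpow_le_rpow (hd0 n) h1 (hexp_nn n)
      _ ≤ (max 1 (supK K f)) ^ (1:ℝ) :=
          Real.rpow_le_rpow_of_exponent_le (le_max_left _ _) (hexp_le_one n)
      _ = max 1 (supK K f) := Real.rpow_one _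
  have hdbdd : IsBoundedUnder (· ≤ ·) atTop
      (fun n : ℕ => dnApprox K f n ^ ((n:ℝ)⁻¹)) :=
    ⟨max 1 (supK K f), eventually_map.mpr (Eventually.of_forall hdseq_le)⟩
  have hρ0 : 0 ≤ ρ := by
    rw [← hd]
    exact le_limsup_of_frequently_le
      (Frequently.of_forall fun n => Real.rpow_nonneg (hd0 n) _) hdbdd
  -- the key estimate
  have key : ∀ ε : ℝ, 0 < ε → ∃ B0 : ℝ, 1 ≤ B0 ∧ ∀ n : ℕ,
      supK K (fun z => f z - evalP (p n) z) ≤ B0 * (1 + ε) ^ n * dnApprox K f n := by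
    intro ε hε
    obtain ⟨M, hM, hBMs⟩ := hBM ε hε
    refine ⟨1 + 2 * M * C, by nlinarith, ?_⟩
    intro n
    have hstep : ∀ q : MvPolynomial (Fin N) ℂ, q.totalDegree ≤ n →
        supK K (fun z => f z - evalP (p n) z) ≤
          (1 + 2 * M * C * (1 + ε) ^ n) * supK K (fun z => f z - evalP q z) := by
      intro q hq
      have hdeg : (q - p n).totalDegree ≤ n := by
        calc (q - p n).totalDegree = (q + (- p n)).totalDegree := by rw [sub_eq_add_neg]
          _ ≤ max q.totalDegree (- p n).totalDegree := MvPolynomial.totalDegree_add _ _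
          _ ≤ n := by rw [MvPolynomial.totalDegree_neg]; exact max_le hq (hpdeg n)
      have hpow : (1 + ε) ^ (q - p n).totalDegree ≤ (1 + ε) ^ n :=
        pow_le_pow_right₀ (by linarith) hdeg
      have hL2nn : 0 ≤ L2norm μ (evalP (q - p n)) := Real.sqrt_nonneg _
      have hL2q : L2norm μ (fun z => f z - evalP q z)
          ≤ C * supK K (fun z => f z - evalP q z) := hL2_le _ (hcont q)
      have hsup_u : supK K (evalP (q - p n)) ≤
          M * (1 + ε) ^ n * (2 * (C * supK K (fun z => f z - evalP q z))) := by
        calc supK K (evalP (q - p n))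
            ≤ M * (1 + ε) ^ (q - p n).totalDegree * L2norm μ (evalP (q - p n)) :=
              hBMs (q - p n)
          _ ≤ M * (1 + ε) ^ n * L2norm μ (evalP (q - p n)) :=
              mul_le_mul_of_nonneg_right
                (mul_le_mul_of_nonneg_left hpow hM.le) hL2nn
          _ ≤ M * (1 + ε) ^ n * (2 * L2norm μ (fun z => f z - evalP q z)) := by
              have hMn : (0:ℝ) ≤ M * (1 + ε) ^ n := by positivity
              exact mul_le_mul_of_nonneg_left (hL2sub n q hq) hMn
          _ ≤ M * (1 + ε) ^ n * (2 * (C * supK K (fun z => f z - evalP q z))) := by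
              have hMn : (0:ℝ) ≤ M * (1 + ε) ^ n := by positivity
              have h2 : 2 * L2norm μ (fun z => f z - evalP q z)
                  ≤ 2 * (C * supK K (fun z => f z - evalP q z)) := by linarith
              exact mul_le_mul_of_nonneg_left h2 hMn
      have htr : supK K (fun z => f z - evalP (p n) z) ≤
          supK K (fun z => f z - evalP q z) + supK K (evalP (q - p n)) := by
        refine supK_le hne fun z hz => ?_
        have h1 : ‖f z - evalP (p n) z‖ ≤
            ‖f z - evalP q z‖ + ‖evalP (q - p n) z‖ := by
          rw [evalP_sub]
          have he : f z - evalP (p n) z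
              = (f z - evalP q z) + (evalP q z - evalP (p n) z) := by ring
          rw [he]
          simpa using
            norm_add_le (f z - evalP q z) (evalP q z - evalP (p n) z)
        exact h1.trans (add_le_add (le_supK hK (hcont q) hz)
          (le_supK hK (evalP_continuous (q - p n)).continuousOn hz))
      calc supK K (fun z => f z - evalP (p n) z)
          ≤ supK K (fun z => f z - evalP q z) + supK K (evalP (q - p n)) := htr
        _ ≤ supK K (fun z => f z - evalP q z) +
            M * (1 + ε) ^ n * (2 * (C * supK K (fun z => f z - evalP q z))) :=
            add_le_add_right hsup_u _
        _ = (1 + 2 * M * C * (1 + ε) ^ n) * supK K (fun z => f z - evalP q z) := by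
            ring
    have hΦpos : (0:ℝ) < 1 + 2 * M * C * (1 + ε) ^ n := by positivity
    have h2 : supK K (fun z => f z - evalP (p n) z) ≤
        (1 + 2 * M * C * (1 + ε) ^ n) * dnApprox K f n := by
      by_contra hcon
      push_neg at hcon
      set S := supK K (fun z => f z - evalP (p n) z) with hSdef
      set Φ := 1 + 2 * M * C * (1 + ε) ^ n with hΦdef
      set δ := (S - Φ * dnApprox K f n) / Φ with hδdef
      have hδpos : 0 < δ := div_pos (by linarith) hΦpos
      haveI : Nonempty {p : MvPolynomial (Fin N) ℂ // p.totalDegree ≤ n} := ⟨⟨0, by simp⟩⟩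
      have hlt : (⨅ q : {p : MvPolynomial (Fin N) ℂ // p.totalDegree ≤ n},
          supK K (fun z => f z - evalP q.1 z)) < dnApprox K f n + δ := by
        have : dnApprox K f n < dnApprox K f n + δ := by linarith
        exact this
      obtain ⟨⟨q, hq⟩, hq2⟩ := exists_lt_of_ciInf_lt hlt
      have h4 := hstep q hq
      have h5 : Φ * supK K (fun z => f z - evalP q z) < Φ * (dnApprox K f n + δ) :=
        mul_lt_mul_of_pos_left hq2 hΦpos
      have h6 : Φ * (dnApprox K f n + δ) = S := by
        have hk : δ * Φ = S - Φ * dnApprox K f n := by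
          rw [hδdef]; exact div_mul_cancel₀ _ hΦpos.ne'
        linear_combination hk
      have : S < S := by
        calc S ≤ Φ * supK K (fun z => f z - evalP q z) := h4
          _ < Φ * (dnApprox K f n + δ) := h5
          _ = S := h6
      exact absurd this (lt_irrefl _)
    have hpow1 : (1:ℝ) ≤ (1 + ε) ^ n := one_le_pow₀ (by linarith : (1:ℝ) ≤ 1 + ε)
    have h3 : (1 + 2 * M * C * (1 + ε) ^ n) * dnApprox K f n ≤
        (1 + 2 * M * C) * (1 + ε) ^ n * dnApprox K f n := by
      have := hd0 n
      nlinarith [hM.le, hC0]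
    exact h2.trans h3
  -- eventual upper bound on the g-sequence
  have hub : ∀ ε : ℝ, 0 < ε → ∀ᶠ n in atTop,
      supK K (fun z => f z - evalP (p n) z) ^ ((n:ℝ)⁻¹)
        ≤ (1 + ε) * ((1 + ε) * (ρ + ε)) := by
    intro ε hε
    obtain ⟨B0, hB1, hkey⟩ := key ε hε
    have hB0pos : (0:ℝ) < B0 := lt_of_lt_of_le one_pos hB1
    have htend : Tendsto (fun n : ℕ => B0 ^ ((n:ℝ)⁻¹)) atTop (nhds 1) := by
      have h1 : Tendsto (fun n : ℕ => ((n:ℝ))⁻¹) atTop (nhds 0) :=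
        tendsto_inv_atTop_nhds_zero_nat
      have h2 : ContinuousAt (fun x : ℝ => B0 ^ x) 0 :=
        Real.continuousAt_const_rpow hB0pos.ne'
      have h3 := h2.tendsto.comp h1
      simpa [Function.comp_def, Real.rpow_zero] using h3
    have hev1 : ∀ᶠ n : ℕ in atTop, B0 ^ ((n:ℝ)⁻¹) ≤ 1 + ε :=
      Filter.Tendsto.eventually_le_const (show (1:ℝ) < 1 + ε by linarith) htend
    have hev2 : ∀ᶠ n in atTop, dnApprox K f n ^ ((n:ℝ)⁻¹) < ρ + ε := by
      apply eventually_lt_of_limsup_lt _ hdbdd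
      rw [hd]; linarith
    filter_upwards [hev1, hev2, eventually_ge_atTop 1] with n h1 h2 hn1
    have hn0 : ((n:ℝ)) ≠ 0 := by
      have : (0:ℝ) < n := by exact_mod_cast hn1
      exact this.ne'
    have hS := hkey n
    have hSnn := supK_nonneg K (fun z => f z - evalP (p n) z)
    have hprod_nn : (0:ℝ) ≤ B0 * (1 + ε) ^ n := by positivity
    have hcalc : supK K (fun z => f z - evalP (p n) z) ^ ((n:ℝ)⁻¹)
        ≤ B0 ^ ((n:ℝ)⁻¹) * (1 + ε) * dnApprox K f n ^ ((n:ℝ)⁻¹) := by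
      calc supK K (fun z => f z - evalP (p n) z) ^ ((n:ℝ)⁻¹)
          ≤ (B0 * (1 + ε) ^ n * dnApprox K f n) ^ ((n:ℝ)⁻¹) :=
            Real.rpow_le_rpow hSnn hS (hexp_nn n)
        _ = B0 ^ ((n:ℝ)⁻¹) * ((1 + ε) ^ n) ^ ((n:ℝ)⁻¹) * dnApprox K f n ^ ((n:ℝ)⁻¹) := by
            rw [Real.mul_rpow hprod_nn (hd0 n), Real.mul_rpow hB0pos.le (by positivity)]
        _ = B0 ^ ((n:ℝ)⁻¹) * (1 + ε) * dnApprox K f n ^ ((n:ℝ)⁻¹) := by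
            rw [← Real.rpow_natCast (1 + ε) n, ← Real.rpow_mul (by linarith),
              mul_inv_cancel₀ hn0, Real.rpow_one]
    refine hcalc.trans ?_
    have hB0n_nn : (0:ℝ) ≤ B0 ^ ((n:ℝ)⁻¹) := Real.rpow_nonneg hB0pos.le _
    have hdnn : (0:ℝ) ≤ dnApprox K f n ^ ((n:ℝ)⁻¹) := Real.rpow_nonneg (hd0 n) _
    have s1 : B0 ^ ((n:ℝ)⁻¹) * (1 + ε) * dnApprox K f n ^ ((n:ℝ)⁻¹)
        ≤ (1 + ε) * (1 + ε) * dnApprox K f n ^ ((n:ℝ)⁻¹) := by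
      have : B0 ^ ((n:ℝ)⁻¹) * (1 + ε) ≤ (1 + ε) * (1 + ε) :=
        mul_le_mul_of_nonneg_right h1 (by linarith)
      exact mul_le_mul_of_nonneg_right this hdnn
    have s2 : (1 + ε) * (1 + ε) * dnApprox K f n ^ ((n:ℝ)⁻¹)
        ≤ (1 + ε) * (1 + ε) * (ρ + ε) := by
      have h0 : (0:ℝ) ≤ (1 + ε) * (1 + ε) := by positivity
      exact mul_le_mul_of_nonneg_left h2.le h0
    calc B0 ^ ((n:ℝ)⁻¹) * (1 + ε) * dnApprox K f n ^ ((n:ℝ)⁻¹)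
        ≤ (1 + ε) * (1 + ε) * (ρ + ε) := s1.trans s2
      _ = (1 + ε) * ((1 + ε) * (ρ + ε)) := by ring
  -- boundedness / coboundedness of the g-sequence
  have hg_nn : ∀ n : ℕ,
      (0:ℝ) ≤ supK K (fun z => f z - evalP (p n) z) ^ ((n:ℝ)⁻¹) :=
    fun n => Real.rpow_nonneg (supK_nonneg K _) _
  have hgcobdd : IsCoboundedUnder (· ≤ ·) atTop
      (fun n : ℕ => supK K (fun z => f z - evalP (p n) z) ^ ((n:ℝ)⁻¹)) :=
    isCoboundedUnder_le_of_le atTop hg_nn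
  have hgbdd : IsBoundedUnder (· ≤ ·) atTop
      (fun n : ℕ => supK K (fun z => f z - evalP (p n) z) ^ ((n:ℝ)⁻¹)) :=
    ⟨(1 + 1) * ((1 + 1) * (ρ + 1)), eventually_map.mpr (hub 1 one_pos)⟩
  -- lower bound
  have hlow : ρ ≤ limsup (fun n : ℕ =>
      supK K (fun z => f z - evalP (p n) z) ^ ((n:ℝ)⁻¹)) atTop := by
    rw [← hd]
    refine limsup_le_limsup (Eventually.of_forall fun n => ?_) ?_ ?_
    · exact Real.rpow_le_rpow (hd0 n) (hdle n) (hexp_nn n)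
    · exact isCoboundedUnder_le_of_le atTop fun n => Real.rpow_nonneg (hd0 n) _
    · exact hgbdd
  -- upper bound
  have hup : limsup (fun n : ℕ =>
      supK K (fun z => f z - evalP (p n) z) ^ ((n:ℝ)⁻¹)) atTop ≤ ρ := by
    by_contra hcon
    push_neg at hcon
    set L := limsup (fun n : ℕ =>
      supK K (fun z => f z - evalP (p n) z) ^ ((n:ℝ)⁻¹)) atTop with hLdef
    set ε := min 1 ((L - ρ) / 8) with hεdef
    have hεpos : 0 < ε := lt_min one_pos (by linarith)
    have hε1 : ε ≤ 1 := min_le_left _ _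
    have hε2 : ε ≤ (L - ρ) / 8 := min_le_right _ _
    have h1 : L ≤ (1 + ε) * ((1 + ε) * (ρ + ε)) :=
      limsup_le_of_le hgcobdd (hub ε hεpos)
    nlinarith [hρ0, hρ, hcon, hεpos.le, sq_nonneg ε]
  exact le_antisymm hup hlow
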